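/- Let K, L ⊆ S and s0 ∈ S. Then μ_{s0}{ω : ω visits K infinitely often and visits L only finitely often} > 0 if and only if there exists a closed communicating class C of P such that C ∩ K ≠ ∅, C ∩ L = ∅, and some state of C is accessible from s0. (This is the content of Proposition 1 of the paper: the Rabin acceptance condition holds with positive probability if and only if some accessible recurrent class meets the set K to be visited infinitely often and avoids the set L to be visited finitely often; recurrent classes of a finite Markov chain are its closed communicating classes.) -/

import Mathlib

open MeasureTheory Finset Set
open scoped Classical

/-- `μ` is the path measure of the time-homogeneous Markov chain with transition
matrix `P` started at `s0`: it assigns to each finite cylinder the product of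
transition probabilities. -/
def IsPathMeasure {S : Type*} [Fintype S] [DecidableEq S] [MeasurableSpace S]
    (P : S → S → ℝ) (s0 : S) (μ : Measure (ℕ → S)) : Prop :=
  ∀ (n : ℕ) (f : ℕ → S),
    μ {ω | ∀ i ≤ n, ω i = f i} =
      if f 0 = s0 then ENNReal.ofReal (∏ i ∈ Finset.range n, P (f i) (f (i + 1))) else 0

/-- `s'` is accessible from `s`: some matrix power of `P` has positive `(s, s')` entry. -/
def Accessible {S : Type*} [Fintype S] [DecidableEq S] (P : S → S → ℝ) (s s' : S) : Prop :=
  ∃ n : ℕ, 0 < ((Matrix.of P) ^ n) s s'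

/-- `C` is a closed set of the chain: from any state of `C`, the chain stays in `C`. -/
def IsClosedSet {S : Type*} [Fintype S] (P : S → S → ℝ) (C : Set S) : Prop :=
  ∀ s ∈ C, ∑ s' ∈ Finset.univ.filter (· ∈ C), P s s' = 1

/-- A closed communicating class: a nonempty closed set all of whose states
communicate with each other. -/
def IsCCC {S : Type*} [Fintype S] [DecidableEq S] (P : S → S → ℝ) (C : Set S) : Prop :=
  C.Nonempty ∧ IsClosedSet P C ∧ ∀ s ∈ C, ∀ s' ∈ C, Accessible P s s'

set_option linter.unusedSectionVars false
section RabinAux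

namespace RabinAux

variable {S : Type*} [Fintype S] [Nonempty S] [DecidableEq S]

/-! ### Matrix power basics -/

section MatrixBasics

variable (P : S → S → ℝ)

lemma pow_nonneg (hP0 : ∀ s s', 0 ≤ P s s') :
    ∀ n (s t : S), 0 ≤ ((Matrix.of P) ^ n) s t := by
  intro n
  induction n with
  | zero =>
    intro s t
    simp only [pow_zero, Matrix.one_apply]
    split <;> norm_num
  | succ n ih =>
    intro s t
    rw [pow_succ, Matrix.mul_apply]
    exact Finset.sum_nonneg fun x _ => mul_nonneg (ih s x) (hP0 x t)

lemma pow_rowsum (hP1 : ∀ s, ∑ s', P s s' = 1) :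
    ∀ n (s : S), ∑ t, ((Matrix.of P) ^ n) s t = 1 := by
  intro n
  induction n with
  | zero => intro s; simp [Matrix.one_apply]
  | succ n ih =>
    intro s
    simp only [pow_succ, Matrix.mul_apply]
    rw [Finset.sum_comm]
    have h : ∀ x : S, ∑ t, ((Matrix.of P) ^ n) s x * (Matrix.of P) x t
        = ((Matrix.of P) ^ n) s x := by
      intro x
      rw [← Finset.mul_sum]
      have h2 : ∑ t, (Matrix.of P) x t = 1 := hP1 x
      rw [h2, mul_one]
    simp_rw [h]
    exact ih s

lemma pow_le_one (hP0 : ∀ s s', 0 ≤ P s s') (hP1 : ∀ s, ∑ s', P s s' = 1)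
    (n : ℕ) (s t : S) : ((Matrix.of P) ^ n) s t ≤ 1 := by
  calc ((Matrix.of P) ^ n) s t ≤ ∑ u, ((Matrix.of P) ^ n) s u :=
        Finset.single_le_sum (fun u _ => pow_nonneg P hP0 n s u) (Finset.mem_univ t)
    _ = 1 := pow_rowsum P hP1 n s

lemma acc_refl (s : S) : Accessible P s s :=
  ⟨0, by simp [Matrix.one_apply]⟩

lemma acc_trans (hP0 : ∀ s s', 0 ≤ P s s') {s t u : S}
    (h1 : Accessible P s t) (h2 : Accessible P t u) : Accessible P s u := by
  obtain ⟨m, hm⟩ := h1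
  obtain ⟨n, hn⟩ := h2
  refine ⟨m + n, ?_⟩
  rw [pow_add, Matrix.mul_apply]
  have h : 0 < ((Matrix.of P) ^ m) s t * ((Matrix.of P) ^ n) t u := mul_pos hm hn
  refine lt_of_lt_of_le h ?_
  exact Finset.single_le_sum
    (fun x _ => mul_nonneg (pow_nonneg P hP0 m s x) (pow_nonneg P hP0 n x u))
    (Finset.mem_univ t)

lemma acc_single {s t : S} (h : 0 < P s t) : Accessible P s t :=
  ⟨1, by simpa [Matrix.of_apply] using h⟩

lemma acc_step (hP0 : ∀ s s', 0 ≤ P s s') {s t u : S}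
    (h1 : Accessible P s t) (h2 : 0 < P t u) : Accessible P s u :=
  acc_trans P hP0 h1 (acc_single P h2)

lemma pow_zero_pos_eq {s t : S} (h : 0 < ((Matrix.of P) ^ 0) s t) : s = t := by
  by_contra hne
  rw [pow_zero, Matrix.one_apply_ne hne] at h
  exact lt_irrefl 0 h

lemma exists_step (hP1 : ∀ s, ∑ s', P s s' = 1) (s : S) : ∃ t, 0 < P s t := by
  by_contra h
  push_neg at h
  have h2 : ∑ t, P s t ≤ 0 := Finset.sum_nonpos fun t _ => h t
  rw [hP1 s] at h2; linarith

lemma pos_step_front (hP0 : ∀ s s', 0 ≤ P s s') {s v k : S} {m : ℕ}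
    (h1 : 0 < P s v) (h2 : 0 < ((Matrix.of P) ^ m) v k) :
    0 < ((Matrix.of P) ^ (m + 1)) s k := by
  rw [pow_succ', Matrix.mul_apply]
  have h : (0 : ℝ) < (Matrix.of P) s v * ((Matrix.of P) ^ m) v k := mul_pos h1 h2
  refine lt_of_lt_of_le h ?_
  exact Finset.single_le_sum
    (fun x _ => mul_nonneg (hP0 s x) (pow_nonneg P hP0 m x k))
    (Finset.mem_univ v)

lemma accessible_of_path (hP0 : ∀ s s', 0 ≤ P s s') (f : ℕ → S) :
    ∀ n, (∀ i < n, 0 < P (f i) (f (i + 1))) → Accessible P (f 0) (f n) := by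
  intro n
  induction n with
  | zero => intro _; exact acc_refl P _
  | succ n ih =>
    intro h
    exact acc_step P hP0 (ih fun i hi => h i (by omega)) (h n (by omega))

lemma exists_path_of_accessible (hP0 : ∀ s s', 0 ≤ P s s') {s t : S}
    (h : Accessible P s t) :
    ∃ (n : ℕ) (f : ℕ → S), f 0 = s ∧ f n = t ∧ ∀ i < n, 0 < P (f i) (f (i + 1)) := by
  obtain ⟨n, hn⟩ := h
  induction n generalizing t with
  | zero =>
    exact ⟨0, fun _ => s, rfl, (pow_zero_pos_eq P hn), fun i hi => absurd hi (by omega)⟩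
  | succ n ih =>
    rw [pow_succ, Matrix.mul_apply] at hn
    have h : ∑ x : S, (0 : ℝ) < ∑ x, ((Matrix.of P) ^ n) s x * (Matrix.of P) x t := by
      simpa using hn
    obtain ⟨x, -, hx⟩ := Finset.exists_lt_of_sum_lt h
    have hx1 : 0 < ((Matrix.of P) ^ n) s x := by
      rcases (pow_nonneg P hP0 n s x).lt_or_eq with h' | h'
      · exact h'
      · rw [← h'] at hx; simp at hx
    have hx2 : 0 < P x t := by
      rcases (hP0 x t).lt_or_eq with h' | h'
      · exact h'
      · rw [Matrix.of_apply, ← h'] at hx; simp at hx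
    obtain ⟨m, f, hf0, hfm, hstep⟩ := ih hx1
    refine ⟨m + 1, fun i => if i ≤ m then f i else t, by simp [hf0], by simp, ?_⟩
    intro i hi
    rcases lt_or_eq_of_le (Nat.lt_succ_iff.mp hi) with h' | h'
    · simpa [Nat.le_of_lt h', Nat.succ_le_of_lt h'] using hstep i h'
    · subst h'
      simp only [le_refl, if_true, Nat.add_one, if_neg (by omega : ¬ i + 1 ≤ i)]
      rw [hfm]; exact hx2

lemma closed_mem_of_pos (hP0 : ∀ s s', 0 ≤ P s s') (hP1 : ∀ s, ∑ s', P s s' = 1)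
    {C : Set S} (hC : IsClosedSet P C) {u v : S} (hu : u ∈ C) (hv : 0 < P u v) :
    v ∈ C := by
  by_contra hvC
  have h1 : ∑ s' ∈ Finset.univ.filter (· ∈ C), P u s' = 1 := hC u hu
  have h2 : ∑ s' ∈ Finset.univ.filter (fun x => ¬ x ∈ C), P u s' = 0 := by
    have h3 := Finset.sum_filter_add_sum_filter_not Finset.univ (· ∈ C) (P u)
    rw [h1, hP1 u] at h3
    linarith
  have h4 : P u v = 0 := by
    have := (Finset.sum_eq_zero_iff_of_nonneg
      (fun x _ => hP0 u x)).mp h2 v (by simp [hvC])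
    exact this
  rw [h4] at hv; exact lt_irrefl 0 hv

end MatrixBasics

/-! ### Recurrent states -/

section Rec

variable (P : S → S → ℝ)

def RecSt : Set S := {t | ∀ u, Accessible P t u → Accessible P u t}

lemma rec_closure (hP0 : ∀ s s', 0 ≤ P s s') {t v : S} (ht : t ∈ RecSt P)
    (hv : Accessible P t v) : v ∈ RecSt P := by
  intro w hw
  have htw : Accessible P t w := acc_trans P hP0 hv hw
  exact acc_trans P hP0 (ht w htw) hv

lemma exists_rec_aux (hP0 : ∀ s s', 0 ≤ P s s') :
    ∀ n (s : S), (Finset.univ.filter (fun u => Accessible P s u)).card ≤ n →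
      ∃ t ∈ RecSt P, Accessible P s t := by
  intro n
  induction n with
  | zero =>
    intro s hs
    exfalso
    have h : s ∈ Finset.univ.filter (fun u => Accessible P s u) := by
      simp [acc_refl P s]
    have := Finset.card_pos.mpr ⟨s, h⟩
    omega
  | succ n ih =>
    intro s hs
    by_cases hrec : s ∈ RecSt P
    · exact ⟨s, hrec, acc_refl P s⟩
    · simp only [RecSt, Set.mem_setOf_eq] at hrec
      push_neg at hrec
      obtain ⟨u, hsu, hus⟩ := hrec
      have hsub : Finset.univ.filter (fun v => Accessible P u v) ⊆
          Finset.univ.filter (fun v => Accessible P s v) := by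
        intro v hv
        simp only [Finset.mem_filter, Finset.mem_univ, true_and] at hv ⊢
        exact acc_trans P hP0 hsu hv
      have hmem : s ∈ Finset.univ.filter (fun v => Accessible P s v) := by
        simp [acc_refl P s]
      have hnot : s ∉ Finset.univ.filter (fun v => Accessible P u v) := by
        simp [hus]
      have hlt : (Finset.univ.filter (fun v => Accessible P u v)).card <
          (Finset.univ.filter (fun v => Accessible P s v)).card :=
        Finset.card_lt_card (Finset.ssubset_iff_of_subset hsub |>.mpr ⟨s, hmem, hnot⟩)
      obtain ⟨t, ht, hut⟩ := ih u (by omega)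
      exact ⟨t, ht, acc_trans P hP0 hsu hut⟩

lemma exists_rec (hP0 : ∀ s s', 0 ≤ P s s') (s : S) :
    ∃ t ∈ RecSt P, Accessible P s t :=
  exists_rec_aux P hP0 _ s le_rfl

lemma cl_is_ccc (hP0 : ∀ s s', 0 ≤ P s s') (hP1 : ∀ s, ∑ s', P s s' = 1)
    {t : S} (ht : t ∈ RecSt P) : IsCCC P {u | Accessible P t u} := by
  refine ⟨⟨t, acc_refl P t⟩, ?_, ?_⟩
  · intro u hu
    rw [Finset.sum_filter_of_ne, hP1 u]
    intro v _ hv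
    have h : 0 < P u v := (hP0 u v).lt_of_ne (Ne.symm hv)
    exact acc_step P hP0 hu h
  · intro u hu v hv
    exact acc_trans P hP0 (ht u hu) hv

end Rec

/-! ### Avoidance / hitting functionals -/

section AvHit

noncomputable def avf (P : S → S → ℝ) (A : Set S) : ℕ → S → ℝ
  | 0, _ => 1
  | m + 1, s => ∑ t, if t ∈ A then 0 else P s t * avf P A m t

noncomputable def hitf (P : S → S → ℝ) (A : Set S) : ℕ → S → ℝ
  | 0, _ => 0
  | m + 1, s => ∑ t, if t ∈ A then P s t else P s t * hitf P A m t

variable (P : S → S → ℝ) (A : Set S)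

lemma avf_nonneg (hP0 : ∀ s s', 0 ≤ P s s') : ∀ m s, 0 ≤ avf P A m s := by
  intro m
  induction m with
  | zero => intro s; simp [avf]
  | succ m ih =>
    intro s
    rw [avf]
    refine Finset.sum_nonneg fun t _ => ?_
    split
    · exact le_refl 0
    · exact mul_nonneg (hP0 s t) (ih t)

lemma hitf_nonneg (hP0 : ∀ s s', 0 ≤ P s s') : ∀ m s, 0 ≤ hitf P A m s := by
  intro m
  induction m with
  | zero => intro s; simp [hitf]
  | succ m ih =>
    intro s
    rw [hitf]
    refine Finset.sum_nonneg fun t _ => ?_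
    split
    · exact hP0 s t
    · exact mul_nonneg (hP0 s t) (ih t)

lemma avf_add_hitf (hP1 : ∀ s, ∑ s', P s s' = 1) :
    ∀ m s, avf P A m s + hitf P A m s = 1 := by
  intro m
  induction m with
  | zero => intro s; simp [avf, hitf]
  | succ m ih =>
    intro s
    rw [avf, hitf, ← Finset.sum_add_distrib]
    calc (∑ t, ((if t ∈ A then 0 else P s t * avf P A m t) +
            if t ∈ A then P s t else P s t * hitf P A m t))
        = ∑ t, P s t := by
          refine Finset.sum_congr rfl fun t _ => ?_
          split
          · ring
          · rw [← mul_add, ih t, mul_one]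
      _ = 1 := hP1 s

lemma hitf_le_one (hP0 : ∀ s s', 0 ≤ P s s') (hP1 : ∀ s, ∑ s', P s s' = 1)
    (m : ℕ) (s : S) : hitf P A m s ≤ 1 := by
  have h1 := avf_add_hitf P A hP1 m s
  have h2 := avf_nonneg P A hP0 m s
  linarith

lemma hitf_mono (hP0 : ∀ s s', 0 ≤ P s s') :
    ∀ m m', m ≤ m' → ∀ s, hitf P A m s ≤ hitf P A m' s := by
  have step : ∀ m s, hitf P A m s ≤ hitf P A (m + 1) s := by
    intro m
    induction m with
    | zero =>
      intro s
      have h0 : hitf P A 0 s = 0 := by simp [hitf]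
      rw [h0]
      exact hitf_nonneg P A hP0 1 s
    | succ m ih =>
      intro s
      rw [hitf, hitf]
      refine Finset.sum_le_sum fun t _ => ?_
      split
      · exact le_refl _
      · exact mul_le_mul_of_nonneg_left (ih t) (hP0 s t)
  intro m m' hmm
  induction m' with
  | zero => intro s; rw [Nat.le_zero.mp hmm]
  | succ m' ih =>
    intro s
    rcases Nat.lt_succ_iff_lt_or_eq.mp (Nat.lt_succ_of_le hmm) with h | h
    · exact (ih (by omega) s).trans (step m' s)
    · rw [h]

lemma pow_le_hitf (hP0 : ∀ s s', 0 ≤ P s s') (hP1 : ∀ s, ∑ s', P s s' = 1) :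
    ∀ n, 1 ≤ n → ∀ u ∈ A, ∀ s, ((Matrix.of P) ^ n) s u ≤ hitf P A n s := by
  intro n hn
  induction n, hn using Nat.le_induction with
  | base =>
    intro u hu s
    rw [pow_one, hitf]
    have hMP : (Matrix.of P) s u = P s u := rfl
    rw [hMP]
    calc P s u = ∑ t, if t = u then P s u else 0 := by simp
      _ ≤ ∑ t, (if t ∈ A then P s t else P s t * hitf P A 0 t) := by
          refine Finset.sum_le_sum fun t _ => ?_
          by_cases h : t = u
          · subst h; simp [hu]
          · simp only [if_neg h]
            split
            · exact hP0 s t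
            · have h0 : hitf P A 0 t = 0 := by simp [hitf]
              rw [h0, mul_zero]
  | succ n hn ih =>
    intro u hu s
    rw [pow_succ', Matrix.mul_apply, hitf]
    refine Finset.sum_le_sum fun t _ => ?_
    have hMP : (Matrix.of P) s t = P s t := rfl
    rw [hMP]
    split
    · calc P s t * ((Matrix.of P) ^ n) t u ≤ P s t * 1 :=
          mul_le_mul_of_nonneg_left (pow_le_one P hP0 hP1 n t u) (hP0 s t)
        _ = P s t := mul_one _
    · exact mul_le_mul_of_nonneg_left (ih u hu t) (hP0 s t)

lemma avf_add_le (hP0 : ∀ s s', 0 ≤ P s s') {b : ℕ} {B : ℝ} (hB0 : 0 ≤ B)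
    (hB : ∀ t, avf P A b t ≤ B) : ∀ a s, avf P A (a + b) s ≤ avf P A a s * B := by
  intro a
  induction a with
  | zero => intro s; simpa [avf] using hB s
  | succ a ih =>
    intro s
    have hrw : a + 1 + b = (a + b) + 1 := by omega
    rw [hrw, avf, avf, Finset.sum_mul]
    refine Finset.sum_le_sum fun t _ => ?_
    split
    · simp
    · rw [mul_assoc]
      exact mul_le_mul_of_nonneg_left (ih t) (hP0 s t)

lemma avf_block (hP0 : ∀ s s', 0 ≤ P s s') (hP1 : ∀ s, ∑ s', P s s' = 1)
    {N₀ : ℕ} {δ : ℝ} (hδ1 : δ ≤ 1)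
    (hN : ∀ s, δ ≤ hitf P A N₀ s) :
    ∀ m s, avf P A (m * N₀) s ≤ (1 - δ) ^ m := by
  intro m
  induction m with
  | zero => intro s; simp [avf]
  | succ m ih =>
    intro s
    have hrw : (m + 1) * N₀ = N₀ + m * N₀ := by ring
    rw [hrw, pow_succ]
    have h1 : avf P A (N₀ + m * N₀) s ≤ avf P A N₀ s * (1 - δ) ^ m :=
      avf_add_le P A hP0 (_root_.pow_nonneg (by linarith) m) ih N₀ s
    refine h1.trans ?_
    have h2 : avf P A N₀ s ≤ 1 - δ := by
      have h3 := avf_add_hitf P A hP1 N₀ s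
      have h4 := hN s
      linarith
    calc avf P A N₀ s * (1 - δ) ^ m ≤ (1 - δ) * (1 - δ) ^ m :=
          mul_le_mul_of_nonneg_right h2 (_root_.pow_nonneg (by linarith) m)
      _ = (1 - δ) ^ m * (1 - δ) := by ring

end AvHit

/-! ### Cylinders and finite-dimensional events -/

section Cylinders

variable [MeasurableSpace S] [MeasurableSingletonClass S]

def Cyl (f : ℕ → S) (n : ℕ) : Set (ℕ → S) := {ω | ∀ i ≤ n, ω i = f i}

lemma measurableSet_cyl (f : ℕ → S) (n : ℕ) : MeasurableSet (Cyl f n) := by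
  have h : Cyl f n = ⋂ i ∈ Finset.range (n + 1), (fun ω : ℕ → S => ω i) ⁻¹' {f i} := by
    ext ω
    simp only [Cyl, Set.mem_setOf_eq, Set.mem_iInter, Set.mem_preimage,
      Set.mem_singleton_iff, Finset.mem_range]
    constructor
    · intro h i hi; exact h i (by omega)
    · intro h i hi; exact h i (by omega)
  rw [h]
  exact MeasurableSet.biInter (Set.to_countable _)
    (fun i _ => (measurable_pi_apply i) (measurableSet_singleton (f i)))

variable (P : S → S → ℝ) (s0 : S) (μ : Measure (ℕ → S))

lemma cyl_congr {f g : ℕ → S} {n : ℕ} (h : ∀ i ≤ n, f i = g i) : Cyl f n = Cyl g n := by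
  ext ω
  constructor <;> intro hω i hi
  · rw [← h i hi]; exact hω i hi
  · rw [h i hi]; exact hω i hi

lemma mu_cyl (hμ : IsPathMeasure P s0 μ) (f : ℕ → S) (n : ℕ) :
    μ (Cyl f n) =
      if f 0 = s0 then ENNReal.ofReal (∏ i ∈ Finset.range n, P (f i) (f (i + 1))) else 0 :=
  hμ n f

lemma mu_cyl_succ (hP0 : ∀ s s', 0 ≤ P s s') (hμ : IsPathMeasure P s0 μ)
    (f : ℕ → S) (n : ℕ) :
    μ (Cyl f (n + 1)) = μ (Cyl f n) * ENNReal.ofReal (P (f n) (f (n + 1))) := by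
  rw [mu_cyl P s0 μ hμ, mu_cyl P s0 μ hμ]
  split
  · rw [Finset.prod_range_succ, ENNReal.ofReal_mul
      (Finset.prod_nonneg fun i _ => hP0 _ _)]
  · rw [zero_mul]

/-- canonical representatives of level-`n` cylinders -/
noncomputable def Reps (n : ℕ) : Finset (ℕ → S) :=
  Finset.image
    (fun g : Fin (n + 1) → S => fun i : ℕ => g ⟨min i n, Nat.lt_succ_of_le (min_le_right i n)⟩)
    Finset.univ

lemma clamp_mem_reps (n : ℕ) (ω : ℕ → S) :
    (fun i => ω (min i n)) ∈ Reps (S := S) n := by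
  refine Finset.mem_image.mpr ⟨fun j : Fin (n + 1) => ω j, Finset.mem_univ _, ?_⟩
  funext i
  rfl

lemma mem_cyl_clamp (n : ℕ) (ω : ℕ → S) : ω ∈ Cyl (fun i => ω (min i n)) n := by
  intro i hi
  simp [min_eq_left hi]

lemma reps_eq_clamp {n : ℕ} {f : ℕ → S} (hf : f ∈ Reps (S := S) n) {ω : ℕ → S}
    (hω : ω ∈ Cyl f n) : f = fun i => ω (min i n) := by
  obtain ⟨g, -, rfl⟩ := Finset.mem_image.mp hf
  funext i
  have h1 : min i n ≤ n := min_le_right i n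
  have h2 := hω (min i n) h1
  simp only at h2 ⊢
  rw [h2]
  congr 1
  simp only [Fin.ext_iff]
  omega

lemma reps_disjoint {n : ℕ} {f g : ℕ → S} (hf : f ∈ Reps (S := S) n)
    (hg : g ∈ Reps (S := S) n) (hne : f ≠ g) : Disjoint (Cyl f n) (Cyl g n) := by
  rw [Set.disjoint_left]
  intro ω hωf hωg
  exact hne ((reps_eq_clamp hf hωf).trans (reps_eq_clamp hg hωg).symm)

lemma sum_mu_cyl_le_one [IsProbabilityMeasure μ] (n : ℕ) :
    ∑ f ∈ Reps (S := S) n, μ (Cyl f n) ≤ 1 := by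
  rw [← measure_biUnion_finset]
  · calc μ (⋃ f ∈ Reps (S := S) n, Cyl f n) ≤ μ Set.univ := measure_mono (Set.subset_univ _)
      _ = 1 := measure_univ
  · intro f hf g hg hne
    exact reps_disjoint hf hg hne
  · intro f _
    exact measurableSet_cyl f n

/-- key avoidance bound -/
lemma avoid_bound (hP0 : ∀ s s', 0 ≤ P s s') (hμ : IsPathMeasure P s0 μ)
    (A : Set S) :
    ∀ (m n : ℕ) (f : ℕ → S),
      μ (Cyl f n ∩ {ω | ∀ j, n < j → j ≤ n + m → ω j ∉ A}) ≤
        μ (Cyl f n) * ENNReal.ofReal (avf P A m (f n)) := by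
  have hav0 := avf_nonneg P A hP0
  intro m
  induction m with
  | zero =>
    intro n f
    have h1 : avf P A 0 (f n) = 1 := rfl
    rw [h1, ENNReal.ofReal_one, mul_one]
    exact measure_mono Set.inter_subset_left
  | succ m ih =>
    intro n f
    set T : Finset S := Finset.univ.filter (fun t => t ∉ A) with hT
    have hsub : Cyl f n ∩ {ω | ∀ j, n < j → j ≤ n + (m + 1) → ω j ∉ A} ⊆
        ⋃ t ∈ T, (Cyl (Function.update f (n + 1) t) (n + 1) ∩
          {ω | ∀ j, n + 1 < j → j ≤ n + 1 + m → ω j ∉ A}) := by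
      rintro ω ⟨hω1, hω2⟩
      have ht : ω (n + 1) ∉ A := hω2 (n + 1) (by omega) (by omega)
      have htT : ω (n + 1) ∈ T := by simp [hT, ht]
      refine Set.mem_biUnion htT ⟨?_, ?_⟩
      · intro i hi
        rcases Nat.lt_succ_iff_lt_or_eq.mp (Nat.lt_succ_of_le hi) with h | h
        · rw [Function.update_of_ne (by omega)]
          exact hω1 i (by omega)
        · rw [h, Function.update_self]
      · intro j hj1 hj2
        exact hω2 j (by omega) (by omega)
    calc μ (Cyl f n ∩ {ω | ∀ j, n < j → j ≤ n + (m + 1) → ω j ∉ A})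
        ≤ ∑ t ∈ T, μ (Cyl (Function.update f (n + 1) t) (n + 1) ∩
            {ω | ∀ j, n + 1 < j → j ≤ n + 1 + m → ω j ∉ A}) :=
          (measure_mono hsub).trans (measure_biUnion_finset_le T _)
      _ ≤ ∑ t ∈ T, μ (Cyl (Function.update f (n + 1) t) (n + 1)) *
            ENNReal.ofReal (avf P A m t) := by
          refine Finset.sum_le_sum fun t _ => ?_
          have h := ih (n + 1) (Function.update f (n + 1) t)
          simpa [Function.update_self] using h
      _ = ∑ t ∈ T, μ (Cyl f n) * ENNReal.ofReal (P (f n) t) *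
            ENNReal.ofReal (avf P A m t) := by
          refine Finset.sum_congr rfl fun t _ => ?_
          rw [mu_cyl_succ P s0 μ hP0 hμ]
          congr 2
          · exact congrArg μ (cyl_congr fun i hi => Function.update_of_ne (by omega) _ _)
          · rw [Function.update_of_ne (by omega), Function.update_self]
      _ = μ (Cyl f n) * ENNReal.ofReal (avf P A (m + 1) (f n)) := by
          simp_rw [mul_assoc]
          rw [← Finset.mul_sum]
          congr 1
          have hsum : avf P A (m + 1) (f n) =
              ∑ t ∈ T, P (f n) t * avf P A m t := by
            rw [avf, hT, Finset.sum_filter]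
            refine Finset.sum_congr rfl fun t _ => ?_
            by_cases h : t ∈ A <;> simp [h]
          rw [hsum, ENNReal.ofReal_sum_of_nonneg
            (fun t _ => mul_nonneg (hP0 _ _) (hav0 m t))]
          refine Finset.sum_congr rfl fun t _ => ?_
          rw [ENNReal.ofReal_mul (hP0 _ _)]

/-- The master lemma: if from every state some state of `A` is reachable with
positive probability (in at least one step), then almost surely `A` is visited
after any given time. -/
lemma master_avoid [IsProbabilityMeasure μ]
    (hP0 : ∀ s s', 0 ≤ P s s') (hP1 : ∀ s, ∑ s', P s s' = 1)
    (hμ : IsPathMeasure P s0 μ) (A : Set S)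
    (hA : ∀ s : S, ∃ n, 1 ≤ n ∧ ∃ u ∈ A, 0 < ((Matrix.of P) ^ n) s u) (N : ℕ) :
    μ {ω : ℕ → S | ∀ j, N < j → ω j ∉ A} = 0 := by
  have key : ∀ s : S, ∃ n, 1 ≤ n ∧ 0 < hitf P A n s := by
    intro s
    obtain ⟨n, hn1, u, hu, hpos⟩ := hA s
    exact ⟨n, hn1, lt_of_lt_of_le hpos (pow_le_hitf P A hP0 hP1 n hn1 u hu s)⟩
  set N₀ : ℕ := Finset.univ.sup (fun s : S => (key s).choose) with hN₀def
  set δ : ℝ := Finset.univ.inf' Finset.univ_nonempty (fun s : S => hitf P A N₀ s) with hδdef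
  have hδpos : 0 < δ := by
    rw [hδdef, Finset.lt_inf'_iff]
    intro s _
    refine lt_of_lt_of_le (key s).choose_spec.2 (hitf_mono P A hP0 _ _ ?_ s)
    rw [hN₀def]
    exact Finset.le_sup (f := fun s : S => (key s).choose) (Finset.mem_univ s)
  have hδ1 : δ ≤ 1 := by
    have s : S := Classical.arbitrary S
    exact le_trans (Finset.inf'_le _ (Finset.mem_univ s)) (hitf_le_one P A hP0 hP1 N₀ s)
  have hblock : ∀ m s, avf P A (m * N₀) s ≤ (1 - δ) ^ m :=
    avf_block P A hP0 hP1 hδ1 (fun s => Finset.inf'_le _ (Finset.mem_univ s))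
  have hbound : ∀ m : ℕ, μ {ω : ℕ → S | ∀ j, N < j → ω j ∉ A} ≤
      ENNReal.ofReal ((1 - δ) ^ m) := by
    intro m
    have hsub : {ω : ℕ → S | ∀ j, N < j → ω j ∉ A} ⊆
        ⋃ f ∈ Reps (S := S) N,
          (Cyl f N ∩ {ω | ∀ j, N < j → j ≤ N + m * N₀ → ω j ∉ A}) := by
      intro ω hω
      exact Set.mem_biUnion (clamp_mem_reps N ω) ⟨mem_cyl_clamp N ω, fun j hj _ => hω j hj⟩
    calc μ {ω : ℕ → S | ∀ j, N < j → ω j ∉ A}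
        ≤ ∑ f ∈ Reps (S := S) N,
            μ (Cyl f N ∩ {ω | ∀ j, N < j → j ≤ N + m * N₀ → ω j ∉ A}) :=
          (measure_mono hsub).trans (measure_biUnion_finset_le _ _)
      _ ≤ ∑ f ∈ Reps (S := S) N, μ (Cyl f N) * ENNReal.ofReal ((1 - δ) ^ m) := by
          refine Finset.sum_le_sum fun f _ => ?_
          refine (avoid_bound P s0 μ hP0 hμ A (m * N₀) N f).trans ?_
          exact mul_le_mul_right (ENNReal.ofReal_le_ofReal (hblock m (f N))) _
      _ = (∑ f ∈ Reps (S := S) N, μ (Cyl f N)) * ENNReal.ofReal ((1 - δ) ^ m) := by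
          rw [Finset.sum_mul]
      _ ≤ 1 * ENNReal.ofReal ((1 - δ) ^ m) :=
          mul_le_mul_left (sum_mu_cyl_le_one μ N) _
      _ = _ := one_mul _
  by_contra hne
  have hpos : 0 < μ {ω : ℕ → S | ∀ j, N < j → ω j ∉ A} := pos_iff_ne_zero.mpr hne
  have htend : Filter.Tendsto (fun m : ℕ => ENNReal.ofReal ((1 - δ) ^ m))
      Filter.atTop (nhds 0) := by
    have h1 : Filter.Tendsto (fun m : ℕ => (1 - δ) ^ m) Filter.atTop (nhds 0) :=
      tendsto_pow_atTop_nhds_zero_of_lt_one (by linarith) (by linarith)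
    have h2 := (ENNReal.continuous_ofReal.tendsto 0).comp h1
    simpa [Function.comp_def] using h2
  obtain ⟨m, hm⟩ := (htend.eventually_lt_const hpos).exists
  exact absurd (hbound m) (not_le.mpr hm)

/-- a.s. every transition taken has positive probability -/
lemma null_badstep (hP0 : ∀ s s', 0 ≤ P s s') (hμ : IsPathMeasure P s0 μ) :
    μ {ω : ℕ → S | ∃ n, ¬ 0 < P (ω n) (ω (n + 1))} = 0 := by
  have h : {ω : ℕ → S | ∃ n, ¬ 0 < P (ω n) (ω (n + 1))} ⊆
      ⋃ n : ℕ, {ω : ℕ → S | ¬ 0 < P (ω n) (ω (n + 1))} := by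
    rintro ω ⟨n, hn⟩
    exact Set.mem_iUnion.mpr ⟨n, hn⟩
  refine measure_mono_null h (measure_iUnion_null fun n => ?_)
  have hsub : {ω : ℕ → S | ¬ 0 < P (ω n) (ω (n + 1))} ⊆
      ⋃ f ∈ (Reps (S := S) (n + 1)).filter (fun f => ¬ 0 < P (f n) (f (n + 1))),
        Cyl f (n + 1) := by
    intro ω hω
    refine Set.mem_biUnion (Finset.mem_filter.mpr ⟨clamp_mem_reps (n + 1) ω, ?_⟩)
      (mem_cyl_clamp (n + 1) ω)
    have h1 : min n (n + 1) = n := by omega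
    have h2 : min (n + 1) (n + 1) = n + 1 := by omega
    simpa [h1, h2] using hω
  refine measure_mono_null hsub ?_
  refine le_antisymm (le_trans (measure_biUnion_finset_le _ _) ?_) (zero_le)
  refine le_of_eq (Finset.sum_eq_zero fun f hf => ?_)
  rw [Finset.mem_filter] at hf
  rw [mu_cyl P s0 μ hμ]
  have hzero : P (f n) (f (n + 1)) = 0 :=
    le_antisymm (not_lt.mp hf.2) (hP0 _ _)
  have hprod : ∏ i ∈ Finset.range (n + 1), P (f i) (f (i + 1)) = 0 :=
    Finset.prod_eq_zero (Finset.mem_range.mpr (by omega)) hzero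
  rw [hprod]
  split <;> simp

/-- a.s. the trajectory starts at `s0` -/
lemma null_badstart (hμ : IsPathMeasure P s0 μ) :
    μ {ω : ℕ → S | ω 0 ≠ s0} = 0 := by
  have hsub : {ω : ℕ → S | ω 0 ≠ s0} ⊆
      ⋃ f ∈ (Reps (S := S) 0).filter (fun f => f 0 ≠ s0), Cyl f 0 := by
    intro ω hω
    exact Set.mem_biUnion (Finset.mem_filter.mpr ⟨clamp_mem_reps 0 ω, by simpa using hω⟩)
      (mem_cyl_clamp 0 ω)
  refine measure_mono_null hsub ?_
  refine le_antisymm (le_trans (measure_biUnion_finset_le _ _) ?_) (zero_le)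
  refine le_of_eq (Finset.sum_eq_zero fun f hf => ?_)
  rw [Finset.mem_filter] at hf
  rw [mu_cyl P s0 μ hμ, if_neg hf.2]

end Cylinders

lemma infinite_of_unbounded {T : Set ℕ} (h : ∀ N, ∃ j, N < j ∧ j ∈ T) : T.Infinite := by
  intro hfin
  obtain ⟨b, hb⟩ := hfin.bddAbove
  obtain ⟨j, hj1, hj2⟩ := h b
  exact absurd (hb hj2) (by omega)

end RabinAux

end RabinAux

/-- Proposition 1: the Rabin acceptance condition holds with positive probability
iff some closed communicating class accessible from `s0` meets `K` and avoids `L`. -/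
theorem rabin_pos_prob_iff_accessible_feasible_class
    {S : Type*} [Fintype S] [Nonempty S] [DecidableEq S]
    [MeasurableSpace S] [MeasurableSingletonClass S]
    (P : S → S → ℝ) (hP0 : ∀ s s', 0 ≤ P s s') (hP1 : ∀ s, ∑ s', P s s' = 1)
    (K L : Set S) (s0 : S)
    (μ : Measure (ℕ → S)) [IsProbabilityMeasure μ]
    (hμ : IsPathMeasure P s0 μ) :
    0 < μ {ω | {n | ω n ∈ K}.Infinite ∧ {n | ω n ∈ L}.Finite} ↔
      ∃ C : Set S, IsCCC P C ∧ (C ∩ K).Nonempty ∧ C ∩ L = ∅ ∧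
        ∃ s ∈ C, Accessible P s0 s := by
  classical
  open RabinAux in
  constructor
  · -- forward direction
    intro hpos
    -- the bad (null) set
    set Bad : Set (ℕ → S) :=
      {ω : ℕ → S | ∃ n, ¬ 0 < P (ω n) (ω (n + 1))} ∪
      {ω : ℕ → S | ω 0 ≠ s0} ∪
      {ω : ℕ → S | ∀ j, 0 < j → ω j ∉ RecSt P} ∪
      (⋃ (t : S) (k : S) (_ : t ∈ RecSt P ∧ Accessible P t k) (N : ℕ),
        {ω : ℕ → S | ∀ j, N < j → ω j ∉ ({k} ∪ {u | Accessible P t u}ᶜ)}) with hBad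
    have hBadNull : μ Bad = 0 := by
      rw [hBad]
      refine measure_union_null (measure_union_null (measure_union_null ?_ ?_) ?_) ?_
      · exact null_badstep P s0 μ hP0 hμ
      · exact null_badstart P s0 μ hμ
      · refine master_avoid P s0 μ hP0 hP1 hμ (RecSt P) ?_ 0
        intro s
        obtain ⟨t, ht, n, hn⟩ := exists_rec P hP0 s
        rcases Nat.eq_zero_or_pos n with h0 | h0
        · subst h0
          have hst : s = t := pow_zero_pos_eq P hn
          subst hst
          obtain ⟨v, hv⟩ := exists_step P hP1 s
          refine ⟨1, le_refl 1, v, ?_, ?_⟩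
          · exact rec_closure P hP0 ht (acc_single P hv)
          · rw [pow_one]; exact hv
        · exact ⟨n, h0, t, ht, hn⟩
      · refine measure_iUnion_null fun t => measure_iUnion_null fun k => ?_
        refine measure_iUnion_null fun hcond => measure_iUnion_null fun N => ?_
        obtain ⟨htrec, htk⟩ := hcond
        refine master_avoid P s0 μ hP0 hP1 hμ _ ?_ N
        intro s
        obtain ⟨v, hv⟩ := exists_step P hP1 s
        by_cases hvA : v ∈ ({k} ∪ {u | Accessible P t u}ᶜ : Set S)
        · exact ⟨1, le_refl 1, v, hvA, by rw [pow_one]; exact hv⟩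
        · simp only [Set.mem_union, Set.mem_singleton_iff, Set.mem_compl_iff,
            Set.mem_setOf_eq, not_or, not_not] at hvA
          obtain ⟨hvk, hvC⟩ := hvA
          have hvk' : Accessible P v k := acc_trans P hP0 (htrec v hvC) htk
          obtain ⟨m, hm⟩ := hvk'
          refine ⟨m + 1, by omega, k, Set.mem_union_left _ rfl, ?_⟩
          exact pos_step_front P hP0 hv hm
    -- pick a good trajectory
    have hnotsub : ¬ ({ω : ℕ → S | {n | ω n ∈ K}.Infinite ∧ {n | ω n ∈ L}.Finite} ⊆ Bad) := by
      intro hsub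
      rw [measure_mono_null hsub hBadNull] at hpos
      exact lt_irrefl 0 hpos
    obtain ⟨ω, hωR, hωB⟩ := Set.not_subset.mp hnotsub
    rw [hBad] at hωB
    have hω1 : ω ∉ {ω : ℕ → S | ∃ n, ¬ 0 < P (ω n) (ω (n + 1))} :=
      fun h => hωB (Set.mem_union_left _ (Set.mem_union_left _ (Set.mem_union_left _ h)))
    have hω2 : ω ∉ {ω : ℕ → S | ω 0 ≠ s0} :=
      fun h => hωB (Set.mem_union_left _ (Set.mem_union_left _ (Set.mem_union_right _ h)))
    have hω3 : ω ∉ {ω : ℕ → S | ∀ j, 0 < j → ω j ∉ RecSt P} :=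
      fun h => hωB (Set.mem_union_left _ (Set.mem_union_right _ h))
    have hω4 : ω ∉ (⋃ (t : S) (k : S) (_ : t ∈ RecSt P ∧ Accessible P t k) (N : ℕ),
        {ω : ℕ → S | ∀ j, N < j → ω j ∉ ({k} ∪ {u | Accessible P t u}ᶜ)}) :=
      fun h => hωB (Set.mem_union_right _ h)
    have hstep : ∀ n, 0 < P (ω n) (ω (n + 1)) := by
      intro n
      by_contra h
      exact hω1 ⟨n, h⟩
    have hω0 : ω 0 = s0 := by
      by_contra h
      exact hω2 h
    -- every visited state is accessible from each earlier one
    have hseg : ∀ a b, a ≤ b → Accessible P (ω a) (ω b) := by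
      intro a b hab
      induction b, hab using Nat.le_induction with
      | base => exact acc_refl P _
      | succ b hb ih => exact acc_step P hP0 ih (hstep b)
    -- find a recurrent visited state
    have hrec : ∃ j, 0 < j ∧ ω j ∈ RecSt P := by
      by_contra h
      push_neg at h
      exact hω3 fun j hj => h j hj
    obtain ⟨n, hn0, hnrec⟩ := hrec
    set t : S := ω n with htdef
    set C : Set S := {u | Accessible P t u} with hCdef
    have hCm : ∀ m, n ≤ m → ω m ∈ C := fun m hm => hseg n m hm
    -- visits every state of C infinitely often
    have hio : ∀ k, k ∈ C → {m | ω m = k}.Infinite := by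
      intro k hk
      refine infinite_of_unbounded ?_
      intro N
      have hnot : ω ∉ ⋃ (N' : ℕ),
          {ω : ℕ → S | ∀ j, N' < j → ω j ∉ ({k} ∪ {u | Accessible P t u}ᶜ)} := by
        intro hmem
        refine hω4 ?_
        refine Set.mem_iUnion.mpr ⟨t, ?_⟩
        refine Set.mem_iUnion.mpr ⟨k, ?_⟩
        exact Set.mem_iUnion.mpr ⟨⟨hnrec, hk⟩, hmem⟩
      rw [Set.mem_iUnion] at hnot
      push_neg at hnot
      have h := hnot (max N n)
      simp only [Set.mem_setOf_eq, not_forall] at h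
      obtain ⟨j, hj1, hj2⟩ := h
      rw [not_not] at hj2
      have hjn : n ≤ j := le_of_lt (lt_of_le_of_lt (le_max_right N n) hj1)
      have hjC : ω j ∈ C := hCm j hjn
      have hjk : ω j = k := by
        rcases hj2 with h | h
        · exact h
        · exact absurd hjC h
      exact ⟨j, lt_of_le_of_lt (le_max_left N n) hj1, hjk⟩
    refine ⟨C, cl_is_ccc P hP0 hP1 hnrec, ?_, ?_, ⟨t, acc_refl P t, ?_⟩⟩
    · -- C ∩ K nonempty
      have h : ∃ m, n ≤ m ∧ ω m ∈ K := by
        by_contra h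
        push_neg at h
        have hsub : {m | ω m ∈ K} ⊆ Set.Iio n := by
          intro m hm
          by_contra hmn
          simp only [Set.mem_Iio, not_lt] at hmn
          exact absurd hm (h m hmn)
        exact hωR.1 ((Set.finite_Iio n).subset hsub)
      obtain ⟨m, hm1, hm2⟩ := h
      exact ⟨ω m, hCm m hm1, hm2⟩
    · -- C ∩ L empty
      rw [Set.eq_empty_iff_forall_notMem]
      rintro v ⟨hvC, hvL⟩
      have hinf : {m | ω m ∈ L}.Infinite := by
        refine Set.Infinite.mono ?_ (hio v hvC)
        intro m hm
        simp only [Set.mem_setOf_eq] at hm ⊢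
        rw [hm]; exact hvL
      exact hinf hωR.2
    · -- t accessible from s0
      have h := hseg 0 n (by omega)
      rwa [hω0] at h
  · -- backward direction
    rintro ⟨C, hC, ⟨k, hkC, hkK⟩, hCL, s, hsC, hacc⟩
    obtain ⟨n, f, hf0, hfn, hfpos⟩ := exists_path_of_accessible P hP0 hacc
    set A : Set S := {k} ∪ Cᶜ with hAdef
    set Bad : Set (ℕ → S) :=
      {ω : ℕ → S | ∃ m, ¬ 0 < P (ω m) (ω (m + 1))} ∪
      (⋃ (N : ℕ), {ω : ℕ → S | ∀ j, N < j → ω j ∉ A}) with hBad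
    have hBadNull : μ Bad = 0 := by
      rw [hBad]
      refine measure_union_null (null_badstep P s0 μ hP0 hμ) ?_
      refine measure_iUnion_null fun N => ?_
      refine master_avoid P s0 μ hP0 hP1 hμ A ?_ N
      intro u
      obtain ⟨v, hv⟩ := exists_step P hP1 u
      by_cases hvA : v ∈ A
      · exact ⟨1, le_refl 1, v, hvA, by rw [pow_one]; exact hv⟩
      · rw [hAdef] at hvA
        simp only [Set.mem_union, Set.mem_singleton_iff, Set.mem_compl_iff,
          not_or, not_not] at hvA
        obtain ⟨hvk, hvC⟩ := hvA
        have hvk' : Accessible P v k := hC.2.2 v hvC k hkC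
        obtain ⟨m, hm⟩ := hvk'
        refine ⟨m + 1, by omega, k, Set.mem_union_left _ rfl, ?_⟩
        exact pos_step_front P hP0 hv hm
    have hcylpos : 0 < μ (Cyl f n) := by
      rw [mu_cyl P s0 μ hμ, if_pos hf0]
      refine ENNReal.ofReal_pos.mpr ?_
      exact Finset.prod_pos fun i hi => hfpos i (Finset.mem_range.mp hi)
    have hEpos : 0 < μ (Cyl f n \ Bad) := by
      rwa [measure_diff_null hBadNull]
    refine lt_of_lt_of_le hEpos (measure_mono ?_)
    rintro ω ⟨hωcyl, hωB⟩
    rw [hBad] at hωB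
    have hω1 : ω ∉ {ω : ℕ → S | ∃ m, ¬ 0 < P (ω m) (ω (m + 1))} :=
      fun h => hωB (Set.mem_union_left _ h)
    have hω2 : ω ∉ (⋃ (N : ℕ), {ω : ℕ → S | ∀ j, N < j → ω j ∉ A}) :=
      fun h => hωB (Set.mem_union_right _ h)
    have hstep : ∀ m, 0 < P (ω m) (ω (m + 1)) := by
      intro m
      by_contra h
      exact hω1 ⟨m, h⟩
    have hωn : ω n = s := by
      rw [hωcyl n (le_refl n), hfn]
    -- the trajectory stays in C from time n on
    have hstay : ∀ m, n ≤ m → ω m ∈ C := by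
      intro m hm
      induction m, hm using Nat.le_induction with
      | base => rw [hωn]; exact hsC
      | succ m hmn ih =>
        exact closed_mem_of_pos P hP0 hP1 hC.2.1 ih (hstep m)
    -- the trajectory visits k infinitely often
    have hio : {m | ω m = k}.Infinite := by
      refine infinite_of_unbounded ?_
      intro N
      rw [Set.mem_iUnion] at hω2
      push_neg at hω2
      have h := hω2 (max N n)
      simp only [Set.mem_setOf_eq, not_forall] at h
      obtain ⟨j, hj1, hj2⟩ := h
      rw [not_not] at hj2
      have hjn : n ≤ j := le_of_lt (lt_of_le_of_lt (le_max_right N n) hj1)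
      have hjC : ω j ∈ C := hstay j hjn
      have hjk : ω j = k := by
        rw [hAdef] at hj2
        rcases hj2 with h | h
        · exact h
        · exact absurd hjC h
      exact ⟨j, lt_of_le_of_lt (le_max_left N n) hj1, hjk⟩
    constructor
    · -- K visited infinitely often
      refine Set.Infinite.mono ?_ hio
      intro m hm
      simp only [Set.mem_setOf_eq] at hm ⊢
      rw [hm]; exact hkK
    · -- L visited finitely often
      refine (Set.finite_Iio n).subset ?_
      intro m hm
      simp only [Set.mem_setOf_eq] at hm
      by_contra hmn
      simp only [Set.mem_Iio, not_lt] at hmn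
      have hmC : ω m ∈ C := hstay m hmn
      have : ω m ∈ C ∩ L := ⟨hmC, hm⟩
      rw [hCL] at this
      exact this
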